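/- For E > 1, let γ₊(E) ∈ (1,∞) solve 1/q² + 2·ln q = E. Then ∫₁^{γ₊(E)} dx / √(E − 1/x² − 2·ln x) ≥ γ₊(E) · ∫_{1/γ₊(E)}^{1} dy / √(−2·ln y). -/

import Mathlib

open MeasureTheory intervalIntegral Set

private lemma phi_hasDeriv (E x : ℝ) (hx : x ≠ 0) :
    HasDerivAt (fun t : ℝ => E - 1/t^2 - 2*Real.log t) (2/x^3 - 2/x) x := by
  have h2 : HasDerivAt (fun t : ℝ => (1:ℝ)/t^2) (-2/x^3) x := by
    have h := ((hasDerivAt_pow 2 x).inv (pow_ne_zero 2 hx))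
    exact (h.congr_deriv (by field_simp; ring)).congr_of_eventuallyEq (Filter.Eventually.of_forall fun t => by simp [one_div])
  have hl : HasDerivAt (fun t : ℝ => 2*Real.log t) (2/x) x := by
    have := (Real.hasDerivAt_log hx).const_mul 2
    simpa [div_eq_mul_inv] using this
  have := ((hasDerivAt_const x E).sub h2).sub hl
  exact this.congr_deriv (by ring)

/-- φ is strictly decreasing on `[1, g]`. -/
private lemma phi_strictAnti (E g : ℝ) (hg : 1 < g) :
    StrictAntiOn (fun t : ℝ => E - 1/t^2 - 2*Real.log t) (Icc 1 g) := by
  apply strictAntiOn_of_deriv_neg (convex_Icc 1 g)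
  · intro x hx
    have hx0 : x ≠ 0 := by simp only [mem_Icc] at hx; nlinarith [hx.1]
    exact ((continuousAt_const.sub ((continuousAt_const.div
      ((continuous_pow 2).continuousAt) (pow_ne_zero 2 hx0)))).sub
      ((Real.continuousAt_log hx0).const_mul 2)).continuousWithinAt
  · intro x hx
    rw [interior_Icc] at hx
    have hx1 : 1 < x := hx.1
    have hx0 : x ≠ 0 := by positivity
    rw [(phi_hasDeriv E x hx0).deriv]
    have hx3 : 0 < x^3 := by positivity
    rw [sub_neg, div_lt_div_iff₀ hx3 (by positivity : (0:ℝ) < x)]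
    nlinarith [mul_lt_mul_of_pos_left (show (1:ℝ) < x^2 by nlinarith)
      (show (0:ℝ) < 2*x by linarith)]

/-- Linear lower bound `φ x ≥ c (g - x)` on `[m, g]` where `c = 2(m²-1)/g³`, `1 < m`. -/
private lemma phi_lin_lb (E g m : ℝ) (hm : 1 < m) (hmg : m ≤ g)
    (hroot : 1 / g ^ 2 + 2 * Real.log g = E) :
    ∀ x ∈ Icc m g, 2*(m^2-1)/g^3 * (g - x) ≤ E - 1/x^2 - 2*Real.log x := by
  set c : ℝ := 2*(m^2-1)/g^3 with hc
  have hg1 : 1 < g := lt_of_lt_of_le hm hmg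
  have hanti : AntitoneOn (fun t : ℝ => (E - 1/t^2 - 2*Real.log t) - c * (g - t)) (Icc m g) := by
    have hder : ∀ x : ℝ, x ≠ 0 →
        HasDerivAt (fun t : ℝ => (E - 1/t^2 - 2*Real.log t) - c * (g - t))
          ((2/x^3 - 2/x) - c * (-1)) x := by
      intro x hx0
      have h2 : HasDerivAt (fun t : ℝ => g - t) (-1) x := by
        simpa using (hasDerivAt_id x).const_sub g
      exact (phi_hasDeriv E x hx0).sub (h2.const_mul c)
    apply antitoneOn_of_deriv_nonpos (convex_Icc m g)
    · intro x hx
      have hx0 : x ≠ 0 := by simp only [mem_Icc] at hx; nlinarith [hx.1]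
      exact (hder x hx0).differentiableAt.continuousAt.continuousWithinAt
    · intro x hx
      rw [interior_Icc] at hx
      have hx0 : x ≠ 0 := by nlinarith [hx.1]
      exact (hder x hx0).differentiableAt.differentiableWithinAt
    · intro x hx
      rw [interior_Icc] at hx
      have hx1 : 1 < x := lt_trans hm hx.1
      have hx0 : x ≠ 0 := by positivity
      rw [(hder x hx0).deriv]
      have hx3 : (0:ℝ) < x^3 := by positivity
      have hg3 : (0:ℝ) < g^3 := by positivity
      have hkey : c ≤ 2/x - 2/x^3 := by
        have h1 : c ≤ 2*(x^2-1)/x^3 := by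
          rw [hc]
          apply div_le_div₀ (by nlinarith) (by nlinarith [hx.1]) hx3
          exact pow_le_pow_left₀ (by positivity) hx.2.le 3
        calc c ≤ 2*(x^2-1)/x^3 := h1
          _ = 2/x - 2/x^3 := by field_simp
      nlinarith [hkey]
  intro x hx
  have h := hanti hx (right_mem_Icc.mpr hmg) hx.2
  have h' : (E - 1/g^2 - 2*Real.log g) - c*(g-g) ≤ (E - 1/x^2 - 2*Real.log x) - c*(g-x) := h
  have e1 : c*(g-g) = 0 := by ring
  linarith [hroot]

private lemma sqrt_inv_eq (c u : ℝ) (hc : 0 < c) (hu : 0 ≤ u) :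
    (Real.sqrt (c * u))⁻¹ = (Real.sqrt c)⁻¹ * u ^ (-(1/2) : ℝ) := by
  rw [Real.sqrt_mul hc.le, mul_inv, Real.rpow_neg hu, Real.sqrt_eq_rpow u]

/-- Integrability of `C * (g-x)^(-1/2)` on any interval. -/
private lemma dom_integrable (C g a b : ℝ) :
    IntervalIntegrable (fun x : ℝ => C * (g - x) ^ (-(1/2) : ℝ)) volume a b := by
  have h : IntervalIntegrable (fun x : ℝ => x ^ (-(1/2) : ℝ)) volume (g - a) (g - b) :=
    intervalIntegrable_rpow' (by norm_num)
  have h2 := h.comp_sub_left g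
  simpa using h2.const_mul C

theorem stmt_16 (E g : ℝ) (hE : 1 < E) (hg : 1 < g)
    (hroot : 1 / g ^ 2 + 2 * Real.log g = E) :
    g * ∫ y in (1/g)..1, (Real.sqrt (-2 * Real.log y))⁻¹ ≤
      ∫ x in (1:ℝ)..g, (Real.sqrt (E - 1 / x ^ 2 - 2 * Real.log x))⁻¹ := by
  have hg0 : (0:ℝ) < g := by linarith
  have hgne : g ≠ 0 := ne_of_gt hg0
  -- Step 1: substitution y = x / g
  have hsub : g * ∫ y in (1/g)..1, (Real.sqrt (-2 * Real.log y))⁻¹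
      = ∫ x in (1:ℝ)..g, (Real.sqrt (2*Real.log g - 2*Real.log x))⁻¹ := by
    have h := intervalIntegral.integral_comp_div (a := (1:ℝ)) (b := g)
      (f := fun y => (Real.sqrt (-2 * Real.log y))⁻¹) hgne
    rw [div_self hgne] at h
    rw [← smul_eq_mul, ← h]
    apply intervalIntegral.integral_congr
    intro x hx
    rw [uIcc_of_le (le_of_lt hg)] at hx
    have hx0 : x ≠ 0 := by nlinarith [hx.1]
    show (Real.sqrt (-2 * Real.log (x/g)))⁻¹ = (Real.sqrt (2*Real.log g - 2*Real.log x))⁻¹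
    rw [Real.log_div hx0 hgne]
    ring_nf
  rw [hsub]
  -- φ x > 0 for x ∈ [1, g)
  have hφpos : ∀ x ∈ Ico (1:ℝ) g, 0 < E - 1/x^2 - 2*Real.log x := by
    intro x hx
    have h : (E - 1/g^2 - 2*Real.log g) < (E - 1/x^2 - 2*Real.log x) :=
      phi_strictAnti E g hg ⟨hx.1, hx.2.le⟩ (right_mem_Icc.mpr hg.le) hx.2
    linarith [hroot]
  -- key pointwise inequality on [1,g]
  have hpt : ∀ x ∈ Icc (1:ℝ) g,
      (Real.sqrt (2*Real.log g - 2*Real.log x))⁻¹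
        ≤ (Real.sqrt (E - 1/x^2 - 2*Real.log x))⁻¹ := by
    intro x hx
    rcases eq_or_lt_of_le hx.2 with heq | hlt
    · subst heq
      have h0 : E - 1/x^2 - 2*Real.log x = 0 := by linarith [hroot]
      simp [h0]
    · have hφ : 0 < E - 1/x^2 - 2*Real.log x := hφpos x ⟨hx.1, hlt⟩
      have hle : E - 1/x^2 - 2*Real.log x ≤ 2*Real.log g - 2*Real.log x := by
        have h1 : 1/g^2 ≤ 1/x^2 :=
          one_div_le_one_div_of_le (by nlinarith [hx.1]) (by nlinarith [hx.1, hx.2])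
        linarith [hroot]
      exact inv_anti₀ (Real.sqrt_pos.mpr hφ) (Real.sqrt_le_sqrt hle)
  -- log lower bound : 2 log g - 2 log x ≥ 2/g*(g-x) for x ∈ [1,g]
  have hlog : ∀ x ∈ Icc (1:ℝ) g, 2/g * (g - x) ≤ 2*Real.log g - 2*Real.log x := by
    intro x hx
    have hx0 : (0:ℝ) < x := by linarith [hx.1]
    have h := Real.log_le_sub_one_of_pos (x := x/g) (by positivity)
    rw [Real.log_div (ne_of_gt hx0) hgne] at h
    have h2 : Real.log x - Real.log g ≤ x/g - 1 := h
    have h3 : 2/g * (g - x) = 2 * (1 - x/g) := by first | (field_simp; ring) | field_simp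
    rw [h3]
    linarith [h2]
  -- measurability
  have hmeas1 : AEStronglyMeasurable (fun x => (Real.sqrt (2*Real.log g - 2*Real.log x))⁻¹)
      (volume.restrict (Set.uIoc (1:ℝ) g)) :=
    ((Real.continuous_sqrt.measurable.comp
      (measurable_const.sub (Real.measurable_log.const_mul 2))).inv).aestronglyMeasurable
  have hmeas2 : ∀ a b : ℝ, AEStronglyMeasurable
      (fun x => (Real.sqrt (E - 1/x^2 - 2*Real.log x))⁻¹) (volume.restrict (Set.uIoc a b)) := by
    intro a b
    have hinner : Measurable fun x : ℝ => E - 1/x^2 - 2*Real.log x :=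
      (measurable_const.sub (measurable_const.div (measurable_id.pow_const 2))).sub
        (Real.measurable_log.const_mul 2)
    exact ((Real.continuous_sqrt.measurable.comp hinner).inv).aestronglyMeasurable
  -- integrability of lhs integrand
  have hfint : IntervalIntegrable (fun x => (Real.sqrt (2*Real.log g - 2*Real.log x))⁻¹)
      volume 1 g := by
    apply (dom_integrable ((Real.sqrt (2/g))⁻¹) g 1 g).mono_fun hmeas1
    rw [uIoc_of_le hg.le]
    filter_upwards [ae_restrict_mem measurableSet_Ioc] with x hx
    have hgx : (0:ℝ) ≤ g - x := by linarith [hx.2]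
    have hb := hlog x ⟨hx.1.le, hx.2⟩
    have hbpos : (0:ℝ) ≤ 2/g * (g - x) := by positivity
    rw [Real.norm_eq_abs, Real.norm_eq_abs, abs_of_nonneg (by positivity),
      abs_of_nonneg (by positivity)]
    calc (Real.sqrt (2*Real.log g - 2*Real.log x))⁻¹
        ≤ (Real.sqrt (2/g * (g - x)))⁻¹ := by
          rcases eq_or_lt_of_le hbpos with heq | hpos
          · have h5 : g - x = 0 := by
              rcases mul_eq_zero.mp heq.symm with h6 | h6
              · exact absurd h6 (by positivity)
              · exact h6
            have hxg : x = g := by linarith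
            rw [hxg]
            simp
          · exact inv_anti₀ (Real.sqrt_pos.mpr hpos) (Real.sqrt_le_sqrt hb)
      _ = (Real.sqrt (2/g))⁻¹ * (g - x) ^ (-(1/2) : ℝ) :=
          sqrt_inv_eq (2/g) (g - x) (by positivity) hgx
  -- integrability of rhs integrand
  set m : ℝ := (1 + g)/2 with hm
  have hm1 : 1 < m := by rw [hm]; linarith
  have hmg : m < g := by rw [hm]; linarith
  have hFint : IntervalIntegrable (fun x => (Real.sqrt (E - 1/x^2 - 2*Real.log x))⁻¹)
      volume 1 g := by
    have hpart1 : IntervalIntegrable (fun x => (Real.sqrt (E - 1/x^2 - 2*Real.log x))⁻¹)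
        volume 1 m := by
      apply ContinuousOn.intervalIntegrable
      rw [uIcc_of_le hm1.le]
      intro x hx
      have hx0 : x ≠ 0 := by nlinarith [hx.1]
      have hφx : 0 < E - 1/x^2 - 2*Real.log x := hφpos x ⟨hx.1, lt_of_le_of_lt hx.2 hmg⟩
      apply ContinuousWithinAt.inv₀
      · exact (Real.continuous_sqrt.continuousAt.comp
          ((continuousAt_const.sub ((continuousAt_const.div
          ((continuous_pow 2).continuousAt) (pow_ne_zero 2 hx0)))).sub
          ((Real.continuousAt_log hx0).const_mul 2))).continuousWithinAt
      · exact ne_of_gt (Real.sqrt_pos.mpr hφx)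
    have hpart2 : IntervalIntegrable (fun x => (Real.sqrt (E - 1/x^2 - 2*Real.log x))⁻¹)
        volume m g := by
      set c : ℝ := 2*(m^2-1)/g^3 with hc
      have hcpos : 0 < c := by
        rw [hc]
        have h7 : (0:ℝ) < m^2 - 1 := by nlinarith
        positivity
      apply (dom_integrable ((Real.sqrt c)⁻¹) g m g).mono_fun (hmeas2 m g)
      rw [uIoc_of_le hmg.le]
      filter_upwards [ae_restrict_mem measurableSet_Ioc] with x hx
      have hgx : (0:ℝ) ≤ g - x := by linarith [hx.2]
      have hb := phi_lin_lb E g m hm1 hmg.le hroot x ⟨hx.1.le, hx.2⟩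
      have hbpos : (0:ℝ) ≤ c * (g - x) := by positivity
      rw [Real.norm_eq_abs, Real.norm_eq_abs, abs_of_nonneg (by positivity),
        abs_of_nonneg (by positivity)]
      calc (Real.sqrt (E - 1/x^2 - 2*Real.log x))⁻¹
          ≤ (Real.sqrt (c * (g - x)))⁻¹ := by
            rcases eq_or_lt_of_le hbpos with heq | hpos
            · have h5 : g - x = 0 := by
                rcases mul_eq_zero.mp heq.symm with h6 | h6
                · exact absurd h6 (ne_of_gt hcpos)
                · exact h6
              have hxg : x = g := by linarith
              have h0 : E - 1/g^2 - 2*Real.log g = 0 := by linarith [hroot]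
              rw [hxg, h0]
              simp
            · exact inv_anti₀ (Real.sqrt_pos.mpr hpos) (Real.sqrt_le_sqrt hb)
        _ = (Real.sqrt c)⁻¹ * (g - x) ^ (-(1/2) : ℝ) := sqrt_inv_eq c (g - x) hcpos hgx
    exact hpart1.trans hpart2
  exact intervalIntegral.integral_mono_on hg.le hfint hFint hpt
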